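/- Let d ≥ 1, let 0 ≤ a < b, let L > 0, and let ψ ∈ L²(ℝ^d) be a real-valued function vanishing almost everywhere outside the spherical layer {x : a ≤ |x| ≤ b}. For c ∈ ℝ set f(c) = ∫_{| |x| − c | < L} |ψ(x)|² dx, and suppose c ∈ [a,b] is a point at which f attains its maximum over [a,b]. Define φ : ℝ^d → ℝ by φ(x) = 1 if ||x| − c| < L, φ(x) = 0 if ||x| − c| ≥ 3L, and φ(x) = 3/2 − ||x| − c|/(2L) otherwise. Then ∫_{ℝ^d} |∇φ(x)|² ψ(x)² dx ≤ (1/(2L²)) ∫_{ℝ^d} |φ(x) ψ(x)|² dx. -/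

import Mathlib

open MeasureTheory

private lemma aux_split (L c t : ℝ) (hL : 0 < L) :
    (L < |t - c| ∧ |t - c| < 3 * L) ↔ (|t - (c + 2*L)| < L ∨ |t - (c - 2*L)| < L) := by
  rcases le_total c t with h | h
  · rw [abs_of_nonneg (by linarith : (0:ℝ) ≤ t - c)]
    constructor
    · rintro ⟨h1, h2⟩; left; rw [abs_lt]; constructor <;> linarith
    · rintro (h' | h') <;> rw [abs_lt] at h' <;> constructor <;> linarith
  · rw [abs_of_nonpos (by linarith : t - c ≤ 0)]
    constructor
    · rintro ⟨h1, h2⟩; right; rw [abs_lt]; constructor <;> linarith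
    · rintro (h' | h') <;> rw [abs_lt] at h' <;> constructor <;> linarith

private lemma aux_g_lip (L c : ℝ) (hL : 0 < L) (s t : ℝ) :
    |min 1 (max 0 (3/2 - |s - c|/(2*L))) - min 1 (max 0 (3/2 - |t - c|/(2*L)))|
      ≤ (1/(2*L)) * |s - t| := by
  set A := 3/2 - |s - c|/(2*L) with hA
  set B := 3/2 - |t - c|/(2*L) with hB
  have h1 : |min 1 (max 0 A) - min 1 (max 0 B)| ≤ max |(1:ℝ) - 1| |max 0 A - max 0 B| :=
    abs_min_sub_min_le_max 1 (max 0 A) 1 (max 0 B)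
  have h2 : |max 0 A - max 0 B| ≤ |A - B| := by
    rw [max_comm 0 A, max_comm 0 B]; exact abs_max_sub_max_le_abs A B 0
  have h3 : |A - B| = |(|t-c| - |s-c|)| / (2*L) := by
    rw [hA, hB]
    rw [show (3/2 - |s - c|/(2*L)) - (3/2 - |t - c|/(2*L)) = (|t-c| - |s-c|)/(2*L) by ring]
    rw [abs_div, abs_of_pos (by linarith : (0:ℝ) < 2*L)]
  have h4 : |(|t-c| - |s-c|)| ≤ |t - s| := by
    have := abs_abs_sub_abs_le_abs_sub (t-c) (s-c)
    simpa [show t - c - (s - c) = t - s by ring] using this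
  have h5 : |t - s| = |s - t| := abs_sub_comm t s
  have h6 : |A - B| ≤ (1/(2*L)) * |s - t| := by
    rw [h3, div_le_iff₀ (by linarith : (0:ℝ) < 2*L)]
    calc |(|t-c| - |s-c|)| ≤ |s - t| := by rw [← h5]; exact h4
    _ ≤ 1/(2*L) * |s - t| * (2*L) := by
        rw [show 1/(2*L) * |s-t| * (2*L) = |s-t| * ((2*L) / (2*L)) by ring,
          div_self (by linarith : (2:ℝ)*L ≠ 0), mul_one]
  calc |min 1 (max 0 A) - min 1 (max 0 B)| ≤ max |(1:ℝ)-1| |max 0 A - max 0 B| := h1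
    _ ≤ |A - B| := by
        apply max_le _ h2
        · simp only [sub_self, abs_zero]; exact abs_nonneg _
    _ ≤ (1/(2*L)) * |s - t| := h6

set_option maxHeartbeats 1000000 in
/-- The key cutoff estimate (inequality (RD)) in the proof of Lemma 3.2: for `ψ ∈ L²`
supported in the spherical layer `{a ≤ |x| ≤ b}`, if `c ∈ [a,b]` maximizes
`c' ↦ ∫_{||x|-c'|<L} |ψ|²` over `[a,b]`, and `φ` is the radial piecewise-linear cutoff
equal to `1` on `{||x|-c| < L}` and `0` on `{||x|-c| ≥ 3L}`, then
`∫ |∇φ|² ψ² ≤ (1/(2L²)) ∫ |φψ|²`. -/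
theorem cutoff_estimate
    (d : ℕ) (hd : 1 ≤ d) (a b L : ℝ) (ha : 0 ≤ a) (hab : a < b) (hL : 0 < L)
    (ψ : EuclideanSpace ℝ (Fin d) → ℝ) (hψL2 : MemLp ψ 2 (volume : Measure (EuclideanSpace ℝ (Fin d))))
    (hψsupp : ∀ᵐ x : EuclideanSpace ℝ (Fin d) ∂volume, ¬(a ≤ ‖x‖ ∧ ‖x‖ ≤ b) → ψ x = 0)
    (c : ℝ) (hc : c ∈ Set.Icc a b)
    (hmax : ∀ c' ∈ Set.Icc a b,
      (∫ x in {x : EuclideanSpace ℝ (Fin d) | |‖x‖ - c'| < L}, (ψ x) ^ 2)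
        ≤ ∫ x in {x : EuclideanSpace ℝ (Fin d) | |‖x‖ - c| < L}, (ψ x) ^ 2)
    (φ : EuclideanSpace ℝ (Fin d) → ℝ)
    (hφ : ∀ x : EuclideanSpace ℝ (Fin d),
      φ x = if |‖x‖ - c| < L then 1
            else if 3 * L ≤ |‖x‖ - c| then 0
            else 3 / 2 - |‖x‖ - c| / (2 * L)) :
    ∫ x : EuclideanSpace ℝ (Fin d), ‖gradient φ x‖ ^ 2 * (ψ x) ^ 2
      ≤ (1 / (2 * L ^ 2)) * ∫ x : EuclideanSpace ℝ (Fin d), (φ x * ψ x) ^ 2 := by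
  haveI : Nontrivial (EuclideanSpace ℝ (Fin d)) := by
    apply Module.nontrivial_of_finrank_pos (R := ℝ)
    rw [finrank_euclideanSpace_fin]; omega
  obtain ⟨hac, hcb⟩ := hc
  -- φ as a clamp of an affine function of the norm
  have hφg : ∀ x : EuclideanSpace ℝ (Fin d), φ x = min 1 (max 0 (3/2 - |‖x‖ - c|/(2*L))) := by
    intro x
    rw [hφ x]
    set u := |‖x‖ - c| with hu
    have hu0 : 0 ≤ u := abs_nonneg _
    split_ifs with h1 h2
    · have hq : u/(2*L) < 1/2 := by rw [div_lt_iff₀ (by linarith : (0:ℝ) < 2*L)]; linarith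
      have : (1:ℝ) ≤ 3/2 - u/(2*L) := by linarith
      rw [max_eq_right (by linarith), min_eq_left this]
    · have hq : 3/2 ≤ u/(2*L) := by rw [le_div_iff₀ (by linarith : (0:ℝ) < 2*L)]; linarith
      have : 3/2 - u/(2*L) ≤ 0 := by linarith
      rw [max_eq_left this, min_eq_right (by norm_num)]
    · push_neg at h1 h2
      have hq1 : u/(2*L) < 3/2 := by rw [div_lt_iff₀ (by linarith : (0:ℝ) < 2*L)]; linarith
      have ha' : 0 ≤ 3/2 - u/(2*L) := by linarith
      have hq2 : 1/2 ≤ u/(2*L) := by rw [le_div_iff₀ (by linarith : (0:ℝ) < 2*L)]; linarith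
      have hb' : 3/2 - u/(2*L) ≤ 1 := by linarith
      rw [max_eq_right ha', min_eq_right hb']
  have hK : (0:ℝ) ≤ 1/(2*L) := by positivity
  -- φ is Lipschitz with constant 1/(2L)
  have hlip : LipschitzWith (Real.toNNReal (1/(2*L))) φ := by
    rw [lipschitzWith_iff_dist_le_mul]
    intro x y
    rw [Real.dist_eq, hφg x, hφg y, Real.coe_toNNReal _ hK]
    calc _ ≤ (1/(2*L)) * |‖x‖ - ‖y‖| := aux_g_lip L c hL ‖x‖ ‖y‖
      _ ≤ (1/(2*L)) * dist x y := by
          apply mul_le_mul_of_nonneg_left _ hK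
          rw [dist_eq_norm]; exact abs_norm_sub_norm_le x y
  have hφcont : Continuous φ := hlip.continuous
  have hφ01 : ∀ x : EuclideanSpace ℝ (Fin d), |φ x| ≤ 1 := by
    intro x
    rw [hφg x, abs_le]
    constructor
    · exact le_min (by norm_num) ((by norm_num : (-1:ℝ) ≤ 0).trans (le_max_left 0 _))
    · exact min_le_left _ _
  -- gradient norm bound
  have hgradnorm : ∀ x : EuclideanSpace ℝ (Fin d), ‖gradient φ x‖ ≤ 1/(2*L) := by
    intro x
    have h1 : ‖gradient φ x‖ = ‖fderiv ℝ φ x‖ := by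
      rw [gradient]; exact LinearIsometryEquiv.norm_map _ _
    rw [h1]
    have := norm_fderiv_le_of_lipschitz ℝ hlip (x₀ := x)
    rwa [Real.coe_toNNReal _ hK] at this
  -- gradient vanishes on the two open regions
  have hgrad0 : ∀ x : EuclideanSpace ℝ (Fin d), (|‖x‖ - c| < L ∨ 3*L < |‖x‖ - c|) → gradient φ x = 0 := by
    intro x hx
    have hf0 : fderiv ℝ φ x = 0 := by
      rcases hx with hx | hx
      · have hopen : IsOpen {y : EuclideanSpace ℝ (Fin d) | |‖y‖ - c| < L} :=
          isOpen_lt ((continuous_norm.sub continuous_const).abs) continuous_const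
        have hev : φ =ᶠ[nhds x] fun _ => (1:ℝ) := by
          filter_upwards [hopen.mem_nhds hx] with y hy
          rw [hφ y, if_pos hy]
        rw [hev.fderiv_eq, fderiv_fun_const]; rfl
      · have hopen : IsOpen {y : EuclideanSpace ℝ (Fin d) | 3*L < |‖y‖ - c|} :=
          isOpen_lt continuous_const ((continuous_norm.sub continuous_const).abs)
        have hev : φ =ᶠ[nhds x] fun _ => (0:ℝ) := by
          filter_upwards [hopen.mem_nhds hx] with y hy
          rw [hφ y, if_neg (by push_neg; linarith [hy, hL] : ¬ |‖y‖ - c| < L),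
            if_pos (le_of_lt hy)]
        rw [hev.fderiv_eq, fderiv_fun_const]; rfl
    rw [gradient, hf0, map_zero]
  -- measurability basics
  have hψm : AEStronglyMeasurable ψ volume := hψL2.1
  have hψ2int : Integrable (fun x : EuclideanSpace ℝ (Fin d) => ψ x ^ 2) volume :=
    (memLp_two_iff_integrable_sq hψm).1 hψL2
  have hρcont : Continuous fun x : EuclideanSpace ℝ (Fin d) => |‖x‖ - c| :=
    (continuous_norm.sub continuous_const).abs
  have hmeasS : ∀ r : ℝ, MeasurableSet {x : EuclideanSpace ℝ (Fin d) | |‖x‖ - r| < L} := by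
    intro r
    exact (isOpen_lt ((continuous_norm.sub continuous_const).abs) continuous_const).measurableSet
  -- the transition region
  set T : Set (EuclideanSpace ℝ (Fin d)) := {x : EuclideanSpace ℝ (Fin d) | L < |‖x‖ - c| ∧ |‖x‖ - c| < 3*L} with hT
  have hTmeas : MeasurableSet T := by
    have h1 : IsOpen {x : EuclideanSpace ℝ (Fin d) | L < |‖x‖ - c|} := isOpen_lt continuous_const hρcont
    have h2 : IsOpen {x : EuclideanSpace ℝ (Fin d) | |‖x‖ - c| < 3*L} := isOpen_lt hρcont continuous_const
    exact (h1.inter h2).measurableSet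
  -- the null set of the two boundary spheres
  have hZ : ∀ᵐ x : EuclideanSpace ℝ (Fin d) ∂volume, |‖x‖ - c| ≠ L ∧ |‖x‖ - c| ≠ 3*L := by
    have hsub : {x : EuclideanSpace ℝ (Fin d) | ¬(|‖x‖ - c| ≠ L ∧ |‖x‖ - c| ≠ 3*L)} ⊆
        Metric.sphere (0:EuclideanSpace ℝ (Fin d)) (c+L) ∪ Metric.sphere (0:EuclideanSpace ℝ (Fin d)) (c-L) ∪
        Metric.sphere (0:EuclideanSpace ℝ (Fin d)) (c+3*L) ∪ Metric.sphere (0:EuclideanSpace ℝ (Fin d)) (c-3*L) := by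
      intro x hx
      simp only [Set.mem_setOf_eq, not_and_or, not_not] at hx
      simp only [Set.mem_union, mem_sphere_iff_norm, sub_zero]
      rcases hx with hx | hx
      · rcases abs_eq (le_of_lt hL) |>.1 hx with h | h
        · left; left; left; linarith
        · left; left; right; linarith
      · rcases abs_eq (by linarith : (0:ℝ) ≤ 3*L) |>.1 hx with h | h
        · left; right; linarith
        · right; linarith
    rw [ae_iff]
    refine measure_mono_null hsub ?_
    refine measure_union_null (measure_union_null (measure_union_null ?_ ?_) ?_) ?_ <;>
      exact Measure.addHaar_sphere volume 0 _
  -- pointwise a.e. bound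
  have hbound : ∀ᵐ x : EuclideanSpace ℝ (Fin d) ∂volume, ‖gradient φ x‖ ^ 2 * ψ x ^ 2
      ≤ T.indicator (fun x : EuclideanSpace ℝ (Fin d) => (1/(4*L^2)) * ψ x ^ 2) x := by
    filter_upwards [hZ] with x hx
    obtain ⟨hx1, hx2⟩ := hx
    rcases lt_or_gt_of_ne hx1 with h1 | h1
    · rw [hgrad0 x (Or.inl h1)]
      simp only [norm_zero]
      rw [zero_pow (by norm_num), zero_mul]
      exact Set.indicator_nonneg (fun y _ => by positivity) x
    · rcases lt_or_gt_of_ne hx2 with h2 | h2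
      · have hxT : x ∈ T := ⟨h1, h2⟩
        rw [Set.indicator_of_mem hxT]
        have hg2 : ‖gradient φ x‖ ^ 2 ≤ (1/(2*L))^2 := by
          apply pow_le_pow_left₀ (norm_nonneg _) (hgradnorm x)
        have : (1/(2*L))^2 = 1/(4*L^2) := by
          rw [div_pow]; norm_num; ring_nf
        rw [this] at hg2
        exact mul_le_mul_of_nonneg_right hg2 (by positivity)
      · rw [hgrad0 x (Or.inr h2)]
        simp only [norm_zero]
        rw [zero_pow (by norm_num), zero_mul]
        exact Set.indicator_nonneg (fun y _ => by positivity) x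
  -- integrability of both sides
  have hdomint : Integrable (T.indicator (fun x : EuclideanSpace ℝ (Fin d) => (1/(4*L^2)) * ψ x ^ 2)) volume :=
    (hψ2int.const_mul _).indicator hTmeas
  have hgradmeas : AEStronglyMeasurable (fun x : EuclideanSpace ℝ (Fin d) => ‖gradient φ x‖ ^ 2 * ψ x ^ 2) volume := by
    have h1 : Measurable fun x : EuclideanSpace ℝ (Fin d) => gradient φ x := by
      have : Measurable fun x : EuclideanSpace ℝ (Fin d) => fderiv ℝ φ x := measurable_fderiv ℝ φ
      exact (LinearIsometryEquiv.continuous _).measurable.comp this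
    exact ((h1.norm.pow_const 2).aestronglyMeasurable).mul hψ2int.aestronglyMeasurable
  have hlhsint : Integrable (fun x : EuclideanSpace ℝ (Fin d) => ‖gradient φ x‖ ^ 2 * ψ x ^ 2) volume := by
    refine Integrable.mono hdomint hgradmeas ?_
    filter_upwards [hbound] with x hx
    rw [Real.norm_eq_abs, abs_of_nonneg (by positivity)]
    refine hx.trans ?_
    rw [Real.norm_eq_abs]
    exact le_abs_self _
  -- the two shifted layers
  set Tp : Set (EuclideanSpace ℝ (Fin d)) := {x : EuclideanSpace ℝ (Fin d) | |‖x‖ - (c + 2*L)| < L} with hTp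
  set Tm : Set (EuclideanSpace ℝ (Fin d)) := {x : EuclideanSpace ℝ (Fin d) | |‖x‖ - (c - 2*L)| < L} with hTm
  have hTsplit : T = Tp ∪ Tm := by
    ext x
    simp only [hT, hTp, hTm, Set.mem_setOf_eq, Set.mem_union]
    exact aux_split L c ‖x‖ hL
  have hdisj : Disjoint Tp Tm := by
    rw [Set.disjoint_left]
    intro x hxp hxm
    rw [hTp, Set.mem_setOf_eq, abs_lt] at hxp
    rw [hTm, Set.mem_setOf_eq, abs_lt] at hxm
    linarith [hxp.1, hxm.2]
  have hTint : ∫ x in T, ψ x ^ 2 = (∫ x in Tp, ψ x ^ 2) + ∫ x in Tm, ψ x ^ 2 := by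
    rw [hTsplit]
    exact setIntegral_union hdisj (hmeasS _) hψ2int.integrableOn hψ2int.integrableOn
  -- the layer and the indicator trick
  set layer : Set (EuclideanSpace ℝ (Fin d)) := {x : EuclideanSpace ℝ (Fin d) | a ≤ ‖x‖ ∧ ‖x‖ ≤ b} with hlayer
  have hlayermeas : MeasurableSet layer := by
    have h1 : IsClosed {x : EuclideanSpace ℝ (Fin d) | a ≤ ‖x‖} := isClosed_le continuous_const continuous_norm
    have h2 : IsClosed {x : EuclideanSpace ℝ (Fin d) | ‖x‖ ≤ b} := isClosed_le continuous_norm continuous_const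
    exact (h1.inter h2).measurableSet
  have hind : (fun x : EuclideanSpace ℝ (Fin d) => ψ x ^ 2) =ᵐ[volume] layer.indicator (fun x : EuclideanSpace ℝ (Fin d) => ψ x ^ 2) := by
    filter_upwards [hψsupp] with x hx
    by_cases hxl : x ∈ layer
    · rw [Set.indicator_of_mem hxl]
    · rw [Set.indicator_of_notMem hxl, hx (by simpa [hlayer] using hxl)]
      norm_num
  -- the clamped centers
  have hstep : ∀ c' : ℝ, c' ∈ Set.Icc a b →
      ∀ S : Set (EuclideanSpace ℝ (Fin d)), MeasurableSet S → (∀ x ∈ S ∩ layer, |‖x‖ - c'| < L) →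
      (∫ x in S, ψ x ^ 2) ≤ ∫ x in {x : EuclideanSpace ℝ (Fin d) | |‖x‖ - c| < L}, ψ x ^ 2 := by
    intro c' hc' S hS hsub
    have e1 : (∫ x in S, ψ x ^ 2) = ∫ x in S, layer.indicator (fun x : EuclideanSpace ℝ (Fin d) => ψ x ^ 2) x :=
      integral_congr_ae (ae_restrict_of_ae hind)
    rw [e1, setIntegral_indicator hlayermeas]
    have e2 : (∫ x in S ∩ layer, ψ x ^ 2) ≤ ∫ x in {x : EuclideanSpace ℝ (Fin d) | |‖x‖ - c'| < L}, ψ x ^ 2 := by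
      apply setIntegral_mono_set hψ2int.integrableOn
      · filter_upwards with x using by positivity
      · exact Filter.Eventually.of_forall fun x hx => hsub x hx
    exact e2.trans (hmax c' hc')
  have hTpbound : (∫ x in Tp, ψ x ^ 2) ≤ ∫ x in {x : EuclideanSpace ℝ (Fin d) | |‖x‖ - c| < L}, ψ x ^ 2 := by
    rcases le_total (c + 2*L) b with h | h
    · apply hstep (c + 2*L) ⟨by linarith, h⟩ Tp (hmeasS _)
      intro x hx
      exact hx.1
    · apply hstep b ⟨le_of_lt hab, le_refl b⟩ Tp (hmeasS _)
      rintro x ⟨hx1, hx2⟩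
      rw [hTp, Set.mem_setOf_eq, abs_lt] at hx1
      rw [hlayer, Set.mem_setOf_eq] at hx2
      rw [abs_lt]
      constructor <;> linarith [hx1.1, hx1.2, hx2.1, hx2.2]
  have hTmbound : (∫ x in Tm, ψ x ^ 2) ≤ ∫ x in {x : EuclideanSpace ℝ (Fin d) | |‖x‖ - c| < L}, ψ x ^ 2 := by
    rcases le_total a (c - 2*L) with h | h
    · apply hstep (c - 2*L) ⟨h, by linarith⟩ Tm (hmeasS _)
      intro x hx
      exact hx.1
    · apply hstep a ⟨le_refl a, le_of_lt hab⟩ Tm (hmeasS _)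
      rintro x ⟨hx1, hx2⟩
      rw [hTm, Set.mem_setOf_eq, abs_lt] at hx1
      rw [hlayer, Set.mem_setOf_eq] at hx2
      rw [abs_lt]
      constructor <;> linarith [hx1.1, hx1.2, hx2.1, hx2.2]
  -- the inner integral is dominated by ∫ (φψ)²
  have hrhsint : Integrable (fun x : EuclideanSpace ℝ (Fin d) => (φ x * ψ x) ^ 2) volume := by
    refine Integrable.mono hψ2int ((hφcont.aestronglyMeasurable.mul hψm).pow 2) ?_
    filter_upwards with x
    rw [Real.norm_eq_abs, Real.norm_eq_abs, abs_of_nonneg (by positivity : (0:ℝ) ≤ (φ x * ψ x)^2),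
      abs_of_nonneg (by positivity : (0:ℝ) ≤ ψ x ^ 2)]
    rw [mul_pow]
    have h1 : φ x ^ 2 ≤ 1 := by nlinarith [hφ01 x, abs_nonneg (φ x), sq_abs (φ x)]
    nlinarith [sq_nonneg (ψ x), h1]
  have hinnerbound : (∫ x in {x : EuclideanSpace ℝ (Fin d) | |‖x‖ - c| < L}, ψ x ^ 2)
      ≤ ∫ x : EuclideanSpace ℝ (Fin d), (φ x * ψ x) ^ 2 := by
    have e1 : (∫ x in {x : EuclideanSpace ℝ (Fin d) | |‖x‖ - c| < L}, ψ x ^ 2)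
        = ∫ x in {x : EuclideanSpace ℝ (Fin d) | |‖x‖ - c| < L}, (φ x * ψ x) ^ 2 := by
      apply setIntegral_congr_fun (hmeasS c)
      intro x hx
      simp only
      rw [hφ x, if_pos (show |‖x‖ - c| < L from hx), one_mul]
    rw [e1]
    apply setIntegral_le_integral hrhsint
    filter_upwards with x using by positivity
  -- put everything together
  have hmain : ∫ x : EuclideanSpace ℝ (Fin d), ‖gradient φ x‖ ^ 2 * ψ x ^ 2
      ≤ (1/(4*L^2)) * ∫ x in T, ψ x ^ 2 := by
    calc ∫ x : EuclideanSpace ℝ (Fin d), ‖gradient φ x‖ ^ 2 * ψ x ^ 2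
        ≤ ∫ x : EuclideanSpace ℝ (Fin d), T.indicator (fun x : EuclideanSpace ℝ (Fin d) => (1/(4*L^2)) * ψ x ^ 2) x :=
          integral_mono_ae hlhsint hdomint hbound
      _ = ∫ x in T, (1/(4*L^2)) * ψ x ^ 2 := integral_indicator hTmeas
      _ = (1/(4*L^2)) * ∫ x in T, ψ x ^ 2 := integral_const_mul _ _
  have h4 : (0:ℝ) < 1/(4*L^2) := by positivity
  have hTI : ∫ x in T, ψ x ^ 2
      ≤ 2 * ∫ x in {x : EuclideanSpace ℝ (Fin d) | |‖x‖ - c| < L}, ψ x ^ 2 := by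
    rw [hTint]; linarith [hTpbound, hTmbound]
  have hs : (2:ℝ) * (1/(4*L^2)) = 1/(2*L^2) := by
    field_simp
    ring
  calc ∫ x : EuclideanSpace ℝ (Fin d), ‖gradient φ x‖ ^ 2 * (ψ x) ^ 2
      ≤ (1/(4*L^2)) * ∫ x in T, ψ x ^ 2 := hmain
    _ ≤ (1/(4*L^2)) * (2 * ∫ x in {x : EuclideanSpace ℝ (Fin d) | |‖x‖ - c| < L}, ψ x ^ 2) :=
        mul_le_mul_of_nonneg_left hTI h4.le
    _ = (1/(2*L^2)) * ∫ x in {x : EuclideanSpace ℝ (Fin d) | |‖x‖ - c| < L}, ψ x ^ 2 := by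
        rw [← hs]; ring
    _ ≤ (1/(2*L^2)) * ∫ x : EuclideanSpace ℝ (Fin d), (φ x * ψ x) ^ 2 :=
        mul_le_mul_of_nonneg_left hinnerbound (by positivity)
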